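/- Let E be a Banach space with a Schauder basis (e_j)_j and coefficient functionals (e_j')_j. The basis (e_j)_j is boundedly complete (i.e. for every scalar sequence (α_j), boundedness of the partial sums (∑_{j=1}^k α_j e_j)_k implies convergence of ∑_j α_j e_j in E) if and only if the atomic decomposition ({e_j'}, {e_j}) is boundedly complete (i.e. for every x'' ∈ E'', the series ∑_j x''(e_j') e_j converges in E). -/

import Mathlib

open Filter Topology

/-- A Schauder basis `(e_j)` of a Banach space `E`, with coefficient functionals `(e_j')`,
is boundedly complete iff the atomic decomposition `({e_j'}, {e_j})` is boundedly
complete, i.e. `∑_j x''(e_j') e_j` converges in `E` for every `x''` in the bidual. -/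
theorem stmt7 {E : Type*} [NormedAddCommGroup E] [NormedSpace ℝ E] [CompleteSpace E]
    (e : ℕ → E) (e' : ℕ → E →L[ℝ] ℝ)
    (hexp : ∀ x : E, Tendsto (fun n => ∑ j ∈ Finset.range n, e' j x • e j) atTop (𝓝 x))
    (hbiorth : ∀ i j, e' j (e i) = if i = j then (1 : ℝ) else 0) :
    (∀ α : ℕ → ℝ,
        (∃ M : ℝ, ∀ k : ℕ, ‖∑ j ∈ Finset.range k, α j • e j‖ ≤ M) →
        ∃ s : E, Tendsto (fun n => ∑ j ∈ Finset.range n, α j • e j) atTop (𝓝 s)) ↔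
    (∀ x'' : (E →L[ℝ] ℝ) →L[ℝ] ℝ,
        ∃ s : E, Tendsto (fun n => ∑ j ∈ Finset.range n, x'' (e' j) • e j) atTop (𝓝 s)) := by
  constructor
  · intro h x''
    set S : ℕ → E →L[ℝ] E := fun k => ∑ j ∈ Finset.range k, (e' j).smulRight (e j) with hS
    have hSapp : ∀ k x, S k x = ∑ j ∈ Finset.range k, e' j x • e j := by
      intro k x
      simp [hS, ContinuousLinearMap.sum_apply]
    have hpt : ∀ x : E, ∃ C, ∀ k, ‖S k x‖ ≤ C := by
      intro x
      have hb : BddAbove (Set.range fun k => ‖S k x‖) := by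
        have : Tendsto (fun k => ‖S k x‖) atTop (𝓝 ‖x‖) := by
          simpa [hSapp] using (hexp x).norm
        exact this.bddAbove_range
      obtain ⟨C, hC⟩ := hb
      exact ⟨C, fun k => hC (Set.mem_range_self k)⟩
    obtain ⟨C, hC⟩ := banach_steinhaus hpt
    have hC0 : 0 ≤ C := le_trans (norm_nonneg _) (hC 0)
    refine h (fun j => x'' (e' j)) ⟨C * ‖x''‖, fun k => ?_⟩
    refine NormedSpace.norm_le_dual_bound ℝ _ (by positivity) fun f => ?_
    have key : f (∑ j ∈ Finset.range k, x'' (e' j) • e j) = x'' (f.comp (S k)) := by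
      have hcomp : f.comp (S k) = ∑ j ∈ Finset.range k, f (e j) • e' j := by
        ext x
        simp [hSapp, ContinuousLinearMap.sum_apply, mul_comm]
      rw [hcomp, map_sum, map_sum]
      simp [mul_comm]
    rw [key]
    calc ‖x'' (f.comp (S k))‖ ≤ ‖x''‖ * ‖f.comp (S k)‖ := (x'').le_opNorm _
      _ ≤ ‖x''‖ * (‖f‖ * ‖S k‖) := by
        gcongr
        exact ContinuousLinearMap.opNorm_comp_le f (S k)
      _ ≤ ‖x''‖ * (‖f‖ * C) := by
        have := hC k
        gcongr
      _ = C * ‖x''‖ * ‖f‖ := by ring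
  · rintro h α ⟨M, hM⟩
    set s : ℕ → E := fun k => ∑ j ∈ Finset.range k, α j • e j with hs
    have hM0 : 0 ≤ M := le_trans (norm_nonneg _) (hM 0)
    let J := NormedSpace.inclusionInDoubleDual ℝ E
    let u : ℕ → WeakDual ℝ (E →L[ℝ] ℝ) := fun k => StrongDual.toWeakDual (J (s k))
    have huK : ∀ k, u k ∈ (WeakDual.toStrongDual ⁻¹' Metric.closedBall 0 M :
        Set (WeakDual ℝ (E →L[ℝ] ℝ))) := by
      intro k
      simp only [Set.mem_preimage, Metric.mem_closedBall, dist_zero_right]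
      refine (dist_zero_right (WeakDual.toStrongDual (u k))).trans_le ?_
      calc ‖WeakDual.toStrongDual (u k)‖ = ‖J (s k)‖ := rfl
        _ ≤ ‖s k‖ := NormedSpace.double_dual_bound ℝ E (s k)
        _ ≤ M := hM k
    obtain ⟨x'', -, hx''⟩ := (WeakDual.isCompact_closedBall (𝕜 := ℝ) (E := E →L[ℝ] ℝ) 0 M).exists_clusterPt
      (f := Filter.map u atTop)
      (le_principal_iff.mpr (Filter.mem_map.mpr (Filter.Eventually.of_forall huK)))
    have hval : ∀ j, x'' (e' j) = α j := by
      intro j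
      have hcont : ContinuousAt (fun y : WeakDual ℝ (E →L[ℝ] ℝ) => y (e' j)) x'' :=
        (WeakDual.eval_continuous (e' j)).continuousAt
      have hclu : ClusterPt (x'' (e' j)) (Filter.map (fun k => u k (e' j)) atTop) :=
        hx''.map hcont (by rw [Filter.Tendsto, Filter.map_map]; exact le_rfl)
      have hev : Tendsto (fun k => u k (e' j)) atTop (𝓝 (α j)) := by
        refine tendsto_const_nhds.congr' ?_
        filter_upwards [Filter.eventually_ge_atTop (j + 1)] with k hk
        have : u k (e' j) = e' j (s k) := rfl
        rw [this, hs]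
        simp only [map_sum, map_smul, smul_eq_mul, hbiorth, mul_ite, mul_one, mul_zero]
        rw [Finset.sum_ite_eq' (Finset.range k) j fun i => α i]
        simp [Finset.mem_range.mpr hk]
      exact eq_of_nhds_neBot (hclu.mono hev)
    obtain ⟨t, ht⟩ := h (WeakDual.toStrongDual x'')
    refine ⟨t, ?_⟩
    have : ∀ j, (WeakDual.toStrongDual x'') (e' j) = α j := fun j => hval j
    simpa only [this] using ht
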